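/- (Remark 1, high-density regime.) Let q_1,…,q_N > 0 and let 0 < M < N. For c > 0 define p_i(c) = M/N + ( ln q_i − (1/N)·Σ_{j=1}^N ln q_j ) / c. Then Σ_{i=1}^N p_i(c) = M for every c > 0; there exists c_0 > 0 such that for all c ≥ c_0 every coordinate satisfies 0 < p_i(c) < 1 and the point p(c) maximizes Σ_{i=1}^N q_i·(1 − exp(−c·p_i)) over { p ∈ [0,1]^N : Σ_i p_i ≤ M }; and p_i(c) → M/N as c → ∞ for every i. In particular, for high helper density the optimal placement tends to caching all contents evenly with probability M/N. -/

import Mathlib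

/-- Remark 1, high-density regime: for
`p_i(c) = M/N + (ln q_i − (1/N)·Σ_j ln q_j)/c` one has `Σ_i p_i(c) = M` for all
`c > 0`; for all sufficiently large `c` every coordinate lies in `(0,1)` and
`p(c)` maximizes `Σ_i q_i·(1 − exp(−c·p_i))` over `{p ∈ [0,1]^N : Σ_i p_i ≤ M}`;
and `p_i(c) → M/N` as `c → ∞`, i.e. the optimal placement tends to the even
placement. -/
theorem even_cache_high_density (N : ℕ) (q : Fin N → ℝ) (M : ℝ)
    (hq : ∀ i, 0 < q i) (hM0 : 0 < M) (hMN : M < N)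
    (p : ℝ → Fin N → ℝ)
    (hp : ∀ c i, p c i =
      M / N + (Real.log (q i) - (1 / N) * ∑ j, Real.log (q j)) / c) :
    (∀ c : ℝ, 0 < c → ∑ i, p c i = M) ∧
    (∃ c₀ : ℝ, 0 < c₀ ∧ ∀ c : ℝ, c₀ ≤ c →
      (∀ i, 0 < p c i ∧ p c i < 1) ∧
      ∀ y : Fin N → ℝ, (∀ i, y i ∈ Set.Icc (0:ℝ) 1) → ∑ i, y i ≤ M →
        ∑ i, q i * (1 - Real.exp (-(c * y i))) ≤
          ∑ i, q i * (1 - Real.exp (-(c * p c i)))) ∧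
    (∀ i, Filter.Tendsto (fun c => p c i) Filter.atTop (nhds (M / N))) := by
  have hN : (0:ℝ) < N := lt_trans hM0 hMN
  have hNne : (N:ℝ) ≠ 0 := hN.ne'
  set avg : ℝ := (1 / (N:ℝ)) * ∑ j, Real.log (q j) with havg
  set d : Fin N → ℝ := fun i => Real.log (q i) - avg with hd
  -- sum of deviations is zero
  have hdsum : ∑ i, d i = 0 := by
    simp only [hd, Finset.sum_sub_distrib, Finset.sum_const, Finset.card_univ,
      Fintype.card_fin, nsmul_eq_mul, havg]
    field_simp
    ring
  -- Part 1: sum = M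
  have hsum : ∀ c : ℝ, 0 < c → ∑ i, p c i = M := by
    intro c hc
    have : ∀ i, p c i = M / N + d i / c := fun i => hp c i
    simp only [this, Finset.sum_add_distrib, ← Finset.sum_div, hdsum,
      Finset.sum_const, Finset.card_univ, Fintype.card_fin, nsmul_eq_mul]
    field_simp
    ring
  refine ⟨hsum, ?_, ?_⟩
  · -- Part 2
    set D : ℝ := ∑ i, |d i| with hD
    have hDnn : 0 ≤ D := Finset.sum_nonneg fun i _ => abs_nonneg _
    have hdle : ∀ i, |d i| ≤ D := by
      intro i
      exact Finset.single_le_sum (f := fun j => |d j|) (fun j _ => abs_nonneg _)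
        (Finset.mem_univ i)
    set ε : ℝ := min (M / N) (1 - M / N) with hε
    have hMN1 : M / N < 1 := (div_lt_one hN).mpr hMN
    have hMN0 : 0 < M / N := div_pos hM0 hN
    have hεpos : 0 < ε := lt_min hMN0 (by linarith)
    refine ⟨(D + 1) / ε, div_pos (by linarith) hεpos, ?_⟩
    intro c hc
    have hc0 : 0 < c := lt_of_lt_of_le (div_pos (by linarith) hεpos) hc
    have hbound : ∀ i, |d i / c| < ε := by
      intro i
      rw [abs_div, abs_of_pos hc0, div_lt_iff₀ hc0]
      calc |d i| ≤ D := hdle i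
        _ < ε * ((D + 1) / ε) := by
            rw [mul_comm, div_mul_cancel₀ _ hεpos.ne']; linarith
        _ ≤ ε * c := by
            exact mul_le_mul_of_nonneg_left hc hεpos.le
    have hrange : ∀ i, 0 < p c i ∧ p c i < 1 := by
      intro i
      have h1 := abs_lt.mp (hbound i)
      have hε1 : ε ≤ M / N := min_le_left _ _
      have hε2 : ε ≤ 1 - M / N := min_le_right _ _
      rw [hp c i]
      constructor <;> [nlinarith [h1.1]; nlinarith [h1.2]]
    refine ⟨hrange, ?_⟩
    intro y hy hysum
    -- constant marginal
    have hK : ∀ i, q i * Real.exp (-(c * p c i)) = Real.exp (avg - c * (M / N)) := by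
      intro i
      rw [hp c i, ← Real.exp_log (hq i), ← Real.exp_add]
      congr 1
      field_simp
      rw [Real.log_exp]
      ring
    have hpt : ∀ b a : ℝ, 1 - Real.exp (-a) ≤ (1 - Real.exp (-b)) + Real.exp (-b) * (a - b) := by
      intro b a
      have h := Real.add_one_le_exp (b - a)
      have hmul := mul_le_mul_of_nonneg_right h (Real.exp_nonneg (-b))
      rw [← Real.exp_add] at hmul
      have he : b - a + -b = -a := by ring
      rw [he] at hmul
      nlinarith [Real.exp_pos (-b)]
    calc ∑ i, q i * (1 - Real.exp (-(c * y i)))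
        ≤ ∑ i, (q i * (1 - Real.exp (-(c * p c i))) +
            c * Real.exp (avg - c * (M / N)) * (y i - p c i)) := by
          apply Finset.sum_le_sum
          intro i _
          calc q i * (1 - Real.exp (-(c * y i)))
              ≤ q i * ((1 - Real.exp (-(c * p c i))) +
                  Real.exp (-(c * p c i)) * (c * y i - c * p c i)) :=
                mul_le_mul_of_nonneg_left (hpt _ _) (hq i).le
            _ = q i * (1 - Real.exp (-(c * p c i))) +
                c * (q i * Real.exp (-(c * p c i))) * (y i - p c i) := by ring
            _ = q i * (1 - Real.exp (-(c * p c i))) +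
                c * Real.exp (avg - c * (M / N)) * (y i - p c i) := by rw [hK i]
      _ = (∑ i, q i * (1 - Real.exp (-(c * p c i)))) +
            c * Real.exp (avg - c * (M / N)) * ((∑ i, y i) - M) := by
          rw [Finset.sum_add_distrib, ← Finset.mul_sum, Finset.sum_sub_distrib,
            hsum c hc0]
      _ ≤ ∑ i, q i * (1 - Real.exp (-(c * p c i))) := by
          have hle : c * Real.exp (avg - c * (M / N)) * ((∑ i, y i) - M) ≤ 0 :=
            mul_nonpos_of_nonneg_of_nonpos (by positivity) (sub_nonpos.mpr hysum)
          linarith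
  · -- Part 3
    intro i
    have heq : (fun c => p c i) = fun c => M / N + d i / c := by
      funext c; exact hp c i
    rw [heq]
    have h0 : Filter.Tendsto (fun c : ℝ => d i / c) Filter.atTop (nhds 0) :=
      Filter.Tendsto.div_atTop tendsto_const_nhds Filter.tendsto_id
    simpa using (tendsto_const_nhds.add h0)
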